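/- Let a_1,…,a_m be positive integers with Σ_{i=1}^m a_i = 2σ for a positive integer σ. Consider the single-processor caching instance with V = {v_1,…,v_m, v'}, weights μ(v_i) = a_i and μ(v') = σ, capacity r = 2σ, and required sets R_1 = {v_1,…,v_m}, R_2 = {v'}, R_3 = {v_1,…,v_m}. Then the minimum loading cost over all feasible cache traces equals 5σ − s*, where s* = max{ Σ_{i∈S} a_i : S ⊆ [m], Σ_{i∈S} a_i ≤ σ }. In particular, the minimum loading cost equals 4σ if and only if some subset of {a_1,…,a_m} sums to exactly σ, and otherwise it is strictly greater than 4σ. -/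

import Mathlib

open Finset


/-- Single-processor caching with `V = {v_1,…,v_m, v'}`,
`μ(v_i) = a_i`, `μ(v') = σ`, capacity `r = 2σ`, and required sets
`R_1 = {v_1,…,v_m}`, `R_2 = {v'}`, `R_3 = {v_1,…,v_m}` (with `Σ a_i = 2σ`):
the minimum loading cost over all feasible cache traces equals `5σ − s*`, where
`s* = max { Σ_{i∈S} a_i : Σ_{i∈S} a_i ≤ σ }`; it equals `4σ` iff some subset of the
`a_i` sums to exactly `σ`, and otherwise it is strictly greater than `4σ`.
(Node `none` is `v'`; node `some i` is `v_i`.) -/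
theorem statement_4 (m : ℕ) (a : Fin m → ℕ) (ha : ∀ i, 0 < a i)
    (σ : ℕ) (hσ : 0 < σ) (hsum : ∑ i, a i = 2 * σ) :
    let μ : Option (Fin m) → ℝ := fun v => match v with
      | none => (σ : ℝ)
      | some i => (a i : ℝ)
    let feasible : (Fin 4 → Finset (Option (Fin m))) → Prop := fun C =>
      C 0 = ∅ ∧
      (∀ j : Fin 4, ∑ v ∈ C j, μ v ≤ 2 * (σ : ℝ)) ∧
      (∀ i, some i ∈ C 1) ∧ (none ∈ C 2) ∧ (∀ i, some i ∈ C 3)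
    let cost : (Fin 4 → Finset (Option (Fin m))) → ℝ := fun C =>
      ∑ v ∈ C 1 \ C 0, μ v + ∑ v ∈ C 2 \ C 1, μ v + ∑ v ∈ C 3 \ C 2, μ v
    let sStar : ℕ :=
      (Finset.univ.powerset.filter (fun S : Finset (Fin m) => ∑ i ∈ S, a i ≤ σ)).sup
        (fun S => ∑ i ∈ S, a i)
    sInf {c : ℝ | ∃ C, feasible C ∧ cost C = c} = 5 * (σ : ℝ) - (sStar : ℝ) ∧
    (sInf {c : ℝ | ∃ C, feasible C ∧ cost C = c} = 4 * (σ : ℝ) ↔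
      ∃ S : Finset (Fin m), ∑ i ∈ S, a i = σ) ∧
    ((¬ ∃ S : Finset (Fin m), ∑ i ∈ S, a i = σ) →
      4 * (σ : ℝ) < sInf {c : ℝ | ∃ C, feasible C ∧ cost C = c}) := by
  intro μ feasible cost sStar
  have hμnone : μ none = (σ : ℝ) := rfl
  have hμsome : ∀ i, μ (some i) = (a i : ℝ) := fun i => rfl
  have hμ0 : ∀ v, 0 ≤ μ v := by rintro (_ | i) <;> simp [hμnone, hμsome]
  set somes : Finset (Option (Fin m)) := Finset.univ.image some with hsomes
  have hnone_somes : none ∉ somes := by simp [hsomes]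
  have hsomes_sum : ∑ v ∈ somes, μ v = 2 * (σ : ℝ) := by
    rw [hsomes, Finset.sum_image (fun _ _ _ _ h => Option.some_injective _ h)]
    simp only [hμsome]
    rw [← Nat.cast_sum, hsum]; push_cast; ring
  -- sStar facts
  have hsStar_le : sStar ≤ σ :=
    Finset.sup_le (fun S hS => (Finset.mem_filter.mp hS).2)
  have hmem_empty : (∅ : Finset (Fin m)) ∈
      Finset.univ.powerset.filter (fun S : Finset (Fin m) => ∑ i ∈ S, a i ≤ σ) := by simp
  obtain ⟨Sst, hSstmem, hSsteq'⟩ := Finset.exists_mem_eq_sup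
      (Finset.univ.powerset.filter (fun S : Finset (Fin m) => ∑ i ∈ S, a i ≤ σ))
      ⟨∅, hmem_empty⟩ ((fun S => ∑ i ∈ S, a i) : Finset (Fin m) → ℕ)
  have hSsteq : sStar = ∑ i ∈ Sst, a i := hSsteq'
  have hSst_le : ∑ i ∈ Sst, a i ≤ σ := (Finset.mem_filter.mp hSstmem).2
  have hle_sStar : ∀ S : Finset (Fin m), ∑ i ∈ S, a i ≤ σ → ∑ i ∈ S, a i ≤ sStar := by
    intro S hS
    have hmem : S ∈ Finset.univ.powerset.filter (fun S : Finset (Fin m) => ∑ i ∈ S, a i ≤ σ) :=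
      Finset.mem_filter.mpr ⟨Finset.mem_powerset.mpr (Finset.subset_univ S), hS⟩
    exact Finset.le_sup (f := fun S : Finset (Fin m) => ∑ i ∈ S, a i) hmem
  -- lower bound
  have key_lower : ∀ C, feasible C → 5 * (σ : ℝ) - (sStar : ℝ) ≤ cost C := by
    intro C hC
    obtain ⟨hC0, hcap, hC1, hC2, hC3⟩ := hC
    have hsub1 : somes ⊆ C 1 := by
      intro v hv
      rw [hsomes, Finset.mem_image] at hv
      obtain ⟨i, _, rfl⟩ := hv; exact hC1 i
    have hnone1 : none ∉ C 1 := by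
      intro hn
      have hins : insert none somes ⊆ C 1 := Finset.insert_subset hn hsub1
      have h1 : (σ : ℝ) + 2 * σ ≤ ∑ v ∈ C 1, μ v := by
        have e1 : ∑ v ∈ insert none somes, μ v = (σ : ℝ) + 2 * σ := by
          rw [Finset.sum_insert hnone_somes, hsomes_sum, hμnone]
        rw [← e1]
        exact Finset.sum_le_sum_of_subset_of_nonneg hins (fun v _ _ => hμ0 v)
      have h2 := hcap 1
      have hσR : (0:ℝ) < σ := by exact_mod_cast hσ
      linarith
    set T : Finset (Fin m) := Finset.univ.filter (fun i => some i ∈ C 2) with hTdef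
    have hTsub : insert none (T.image some) ⊆ C 2 := by
      intro v hv
      rcases Finset.mem_insert.mp hv with rfl | hv
      · exact hC2
      · rw [Finset.mem_image] at hv
        obtain ⟨i, hi, rfl⟩ := hv
        exact (Finset.mem_filter.mp hi).2
    have hTimg_sum : ∑ v ∈ T.image some, μ v = ∑ i ∈ T, (a i : ℝ) := by
      rw [Finset.sum_image (fun _ _ _ _ h => Option.some_injective _ h)]
    have hT_le_real : (σ : ℝ) + ∑ i ∈ T, (a i : ℝ) ≤ 2 * σ := by
      have h1 : (σ : ℝ) + ∑ i ∈ T, (a i : ℝ) ≤ ∑ v ∈ C 2, μ v := by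
        calc (σ : ℝ) + ∑ i ∈ T, (a i : ℝ)
            = ∑ v ∈ insert none (T.image some), μ v := by
              rw [Finset.sum_insert (by simp), hμnone, hTimg_sum]
          _ ≤ _ := Finset.sum_le_sum_of_subset_of_nonneg hTsub (fun v _ _ => hμ0 v)
      exact le_trans h1 (hcap 2)
    have hT_le : ∑ i ∈ T, a i ≤ σ := by
      have : ((∑ i ∈ T, a i : ℕ) : ℝ) ≤ σ := by
        rw [Nat.cast_sum]; linarith
      exact_mod_cast this
    have hT_le_sStar : ∑ i ∈ T, a i ≤ sStar := hle_sStar T hT_le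
    -- term 1
    have hterm1 : 2 * (σ : ℝ) ≤ ∑ v ∈ C 1 \ C 0, μ v := by
      rw [hC0, Finset.sdiff_empty]
      rw [← hsomes_sum]
      exact Finset.sum_le_sum_of_subset_of_nonneg hsub1 (fun v _ _ => hμ0 v)
    -- term 2
    have hterm2 : (σ : ℝ) ≤ ∑ v ∈ C 2 \ C 1, μ v := by
      have hmem : none ∈ C 2 \ C 1 := Finset.mem_sdiff.mpr ⟨hC2, hnone1⟩
      calc (σ : ℝ) = μ none := hμnone.symm
        _ ≤ _ := Finset.single_le_sum (fun v _ => hμ0 v) hmem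
    -- term 3
    have hterm3 : 2 * (σ : ℝ) - ∑ i ∈ T, (a i : ℝ) ≤ ∑ v ∈ C 3 \ C 2, μ v := by
      have hsub3 : (Finset.univ \ T).image some ⊆ C 3 \ C 2 := by
        intro v hv
        rw [Finset.mem_image] at hv
        obtain ⟨i, hi, rfl⟩ := hv
        rw [Finset.mem_sdiff] at hi
        refine Finset.mem_sdiff.mpr ⟨hC3 i, ?_⟩
        intro h
        exact hi.2 (Finset.mem_filter.mpr ⟨Finset.mem_univ i, h⟩)
      have heq : ∑ v ∈ (Finset.univ \ T).image some, μ v = 2 * (σ : ℝ) - ∑ i ∈ T, (a i : ℝ) := by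
        rw [Finset.sum_image (fun _ _ _ _ h => Option.some_injective _ h)]
        simp only [hμsome]
        rw [Finset.sum_sdiff_eq_sub (Finset.subset_univ T)]
        rw [← Nat.cast_sum, hsum]; push_cast; ring
      rw [← heq]
      exact Finset.sum_le_sum_of_subset_of_nonneg hsub3 (fun v _ _ => hμ0 v)
    have hTcast : (∑ i ∈ T, (a i : ℝ)) ≤ (sStar : ℝ) := by
      rw [← Nat.cast_sum]; exact_mod_cast hT_le_sStar
    show 5 * (σ : ℝ) - (sStar : ℝ) ≤ _
    simp only [cost]
    linarith
  -- optimal trace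
  set Copt : Fin 4 → Finset (Option (Fin m)) := fun j =>
    if j = 0 then ∅ else if j = 2 then insert none (Sst.image some) else somes with hCopt
  have hCopt0 : Copt 0 = ∅ := rfl
  have hCopt1 : Copt 1 = somes := rfl
  have hCopt2 : Copt 2 = insert none (Sst.image some) := rfl
  have hCopt3 : Copt 3 = somes := rfl
  have hSstimg_sum : ∑ v ∈ Sst.image some, μ v = (sStar : ℝ) := by
    rw [Finset.sum_image (fun _ _ _ _ h => Option.some_injective _ h)]
    simp only [hμsome]
    rw [← Nat.cast_sum, ← hSsteq]
  have hfeas : feasible Copt := by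
    refine ⟨hCopt0, ?_, ?_, ?_, ?_⟩
    · intro j
      have hσR : (0:ℝ) ≤ σ := by positivity
      have hsR : (sStar : ℝ) ≤ σ := by exact_mod_cast hsStar_le
      fin_cases j
      · show ∑ v ∈ Copt 0, μ v ≤ 2 * (σ : ℝ)
        rw [hCopt0]; simp only [Finset.sum_empty]; linarith
      · show ∑ v ∈ Copt 1, μ v ≤ 2 * (σ : ℝ)
        rw [hCopt1, hsomes_sum]
      · show ∑ v ∈ Copt 2, μ v ≤ 2 * (σ : ℝ)
        rw [hCopt2, Finset.sum_insert (by simp), hμnone, hSstimg_sum]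
        linarith
      · show ∑ v ∈ Copt 3, μ v ≤ 2 * (σ : ℝ)
        rw [hCopt3, hsomes_sum]
    · intro i; rw [hCopt1, hsomes]; exact Finset.mem_image_of_mem _ (Finset.mem_univ i)
    · rw [hCopt2]; exact Finset.mem_insert_self _ _
    · intro i; rw [hCopt3, hsomes]; exact Finset.mem_image_of_mem _ (Finset.mem_univ i)
  have hcost : cost Copt = 5 * (σ : ℝ) - (sStar : ℝ) := by
    simp only [cost]
    rw [hCopt0, hCopt1, hCopt2, hCopt3]
    have h1 : somes \ (∅ : Finset (Option (Fin m))) = somes := Finset.sdiff_empty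
    have h2 : insert none (Sst.image some) \ somes = {none} := by
      ext v
      simp only [Finset.mem_sdiff, Finset.mem_insert, Finset.mem_singleton, Finset.mem_image]
      constructor
      · rintro ⟨rfl | ⟨i, hi, rfl⟩, hv⟩
        · rfl
        · exact absurd (by rw [hsomes]; exact Finset.mem_image_of_mem _ (Finset.mem_univ i)) hv
      · rintro rfl
        exact ⟨Or.inl rfl, hnone_somes⟩
    have h3 : somes \ insert none (Sst.image some) = (Finset.univ \ Sst).image some := by
      ext v
      simp only [Finset.mem_sdiff, Finset.mem_insert, Finset.mem_image, hsomes]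
      constructor
      · rintro ⟨⟨i, _, rfl⟩, hv⟩
        refine ⟨i, ⟨Finset.mem_univ i, ?_⟩, rfl⟩
        intro hmem
        exact hv (Or.inr ⟨i, hmem, rfl⟩)
      · rintro ⟨i, hi, rfl⟩
        refine ⟨⟨i, Finset.mem_univ i, rfl⟩, ?_⟩
        rintro (h | ⟨j, hj, hji⟩)
        · exact Option.some_ne_none _ h
        · exact hi.2 (by rwa [Option.some_injective _ hji] at hj)
    rw [h1, h2, h3, hsomes_sum]
    have h4 : ∑ v ∈ ({none} : Finset (Option (Fin m))), μ v = (σ : ℝ) := by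
      rw [Finset.sum_singleton, hμnone]
    have h5 : ∑ v ∈ (Finset.univ \ Sst).image some, μ v = 2 * (σ:ℝ) - (sStar : ℝ) := by
      rw [Finset.sum_image (fun _ _ _ _ h => Option.some_injective _ h)]
      simp only [hμsome]
      rw [Finset.sum_sdiff_eq_sub (Finset.subset_univ Sst), ← Nat.cast_sum, ← Nat.cast_sum,
        hsum, ← hSsteq]
      push_cast; ring
    rw [h4, h5]; ring
  -- sInf
  have hmemS : (5 * (σ : ℝ) - (sStar : ℝ)) ∈ {c : ℝ | ∃ C, feasible C ∧ cost C = c} :=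
    ⟨Copt, hfeas, hcost⟩
  have hbdd : BddBelow {c : ℝ | ∃ C, feasible C ∧ cost C = c} := by
    refine ⟨5 * (σ : ℝ) - (sStar : ℝ), ?_⟩
    rintro c ⟨C, hC, rfl⟩
    exact key_lower C hC
  have hmain : sInf {c : ℝ | ∃ C, feasible C ∧ cost C = c} = 5 * (σ : ℝ) - (sStar : ℝ) := by
    apply le_antisymm (csInf_le hbdd hmemS)
    apply le_csInf ⟨_, hmemS⟩
    rintro c ⟨C, hC, rfl⟩
    exact key_lower C hC
  refine ⟨hmain, ?_, ?_⟩
  · rw [hmain]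
    constructor
    · intro h
      have hcast : (sStar : ℝ) = (σ : ℝ) := by linarith
      have h2 : sStar = σ := by exact_mod_cast hcast
      exact ⟨Sst, by rw [← hSsteq, h2]⟩
    · rintro ⟨S, hS⟩
      have h1 : σ ≤ sStar := by
        have := hle_sStar S (le_of_eq hS); omega
      have h2 : sStar = σ := le_antisymm hsStar_le h1
      rw [h2]; ring
  · intro hne
    rw [hmain]
    have h1 : sStar ≠ σ := by
      intro h; exact hne ⟨Sst, by rw [← hSsteq, h]⟩
    have h2 : sStar < σ := lt_of_le_of_ne hsStar_le h1
    have : (sStar : ℝ) < σ := by exact_mod_cast h2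
    linarith
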